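/- Let $V:\mathbb{R}\to\mathbb{R}$ be continuous with $|V(y)| \leq Ce^{y/(4M)}$ for all $y \leq a$ (some $a\in\mathbb{R}$, $C, M > 0$). Then there exists a solution $\psi_1$ of $-\psi_1'' + V\psi_1 = 0$ on $(-\infty, a]$ satisfying $|\psi_1(x) - 1| \leq C' e^{x/(8M)}$ for all $x \leq a$ and some constant $C'$. Moreover $\psi_1$ can be obtained as the unique bounded solution of the Volterra equation $\psi_1(x) = 1 - \int_{-\infty}^x (y-x)V(y)\psi_1(y)\,dy$. -/

import Mathlib

open MeasureTheory Set Filter Real intervalIntegral Topology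

lemma ZES.hasDerivAt_expc {c : ℝ} (hc : c ≠ 0) (y : ℝ) :
    HasDerivAt (fun t => Real.exp (c*t)/c) (Real.exp (c*y)) y := by
  have h := ((Real.hasDerivAt_exp (c*y)).comp y ((hasDerivAt_id y).const_mul c)).div_const c
  simpa [mul_comm, mul_div_assoc, mul_div_cancel_left₀ _ hc] using h

lemma ZES.intervalIntegral_expc {c : ℝ} (hc : 0 < c) (t x : ℝ) :
    ∫ y in t..x, Real.exp (c*y) = Real.exp (c*x)/c - Real.exp (c*t)/c :=
  intervalIntegral.integral_eq_sub_of_hasDerivAt (fun y _ => ZES.hasDerivAt_expc hc.ne' y)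
    ((Real.continuous_exp.comp (continuous_const.mul continuous_id)).intervalIntegrable t x)

lemma ZES.integrableOn_expc {c : ℝ} (hc : 0 < c) (x : ℝ) :
    IntegrableOn (fun y => Real.exp (c*y)) (Iic x) := by
  refine integrableOn_Iic_of_intervalIntegral_norm_bounded (Real.exp (c*x)/c) x
    (fun t => ((Real.continuous_exp.comp (continuous_const.mul continuous_id)).integrableOn_Ioc)) tendsto_id ?_
  filter_upwards [eventually_le_atBot x] with t ht
  simp_rw [Real.norm_of_nonneg (Real.exp_pos _).le, ZES.intervalIntegral_expc hc]
  simp only [id_eq]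
  have := div_nonneg (Real.exp_pos (c*t)).le hc.le
  linarith

lemma ZES.integral_expc {c : ℝ} (hc : 0 < c) (x : ℝ) :
    ∫ y in Iic x, Real.exp (c*y) = Real.exp (c*x)/c := by
  refine tendsto_nhds_unique
    (intervalIntegral_tendsto_integral_Iic x (ZES.integrableOn_expc hc x) tendsto_id) ?_
  have h1 : Tendsto (fun t : ℝ => Real.exp (c*t)/c) atBot (𝓝 0) := by
    have h2 : Tendsto (fun t : ℝ => c * t) atBot atBot := by
      exact Tendsto.const_mul_atBot hc tendsto_id
    simpa using (Real.tendsto_exp_atBot.comp h2).div_const c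
  have := (tendsto_const_nhds (x := Real.exp (c*x)/c) (f := atBot)).sub h1
  rw [sub_zero] at this
  simpa [ZES.intervalIntegral_expc hc] using this

section ZES2
variable {c : ℝ}

lemma ZES.linexp_le {x y : ℝ} (hc : 0 < c) (h : y ≤ x) :
    (x - y) * Real.exp (c*y) ≤ (2/c) * Real.exp (c/2*x) * Real.exp (c/2*y) := by
  have h1 : c/2*(x - y) ≤ Real.exp (c/2*(x-y)) := by
    have := Real.add_one_le_exp (c/2*(x-y)); linarith
  have h2 : (x - y) ≤ (2/c) * Real.exp (c/2*(x-y)) := by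
    rw [div_mul_eq_mul_div, le_div_iff₀ hc]; nlinarith
  have h3 : Real.exp (c/2*(x-y)) * Real.exp (c*y) = Real.exp (c/2*x) * Real.exp (c/2*y) := by
    rw [← Real.exp_add, ← Real.exp_add]; ring_nf
  calc (x - y) * Real.exp (c*y) ≤ (2/c) * Real.exp (c/2*(x-y)) * Real.exp (c*y) :=
        mul_le_mul_of_nonneg_right h2 (Real.exp_pos _).le
  _ = (2/c) * Real.exp (c/2*x) * Real.exp (c/2*y) := by rw [mul_assoc, h3, mul_assoc]

lemma ZES.integrableOn_linexp (hc : 0 < c) (x : ℝ) :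
    IntegrableOn (fun y => (x - y) * Real.exp (c*y)) (Iic x) := by
  refine Integrable.mono' ((ZES.integrableOn_expc (by linarith : (0:ℝ) < c/2) x).const_mul
    ((2/c) * Real.exp (c/2*x))) ?_ ?_
  · exact ((continuous_const.sub continuous_id).mul
      (Real.continuous_exp.comp (continuous_const.mul continuous_id))).aestronglyMeasurable
  · refine (ae_restrict_iff' measurableSet_Iic).2 (ae_of_all _ fun y hy => ?_)
    rw [Real.norm_of_nonneg (mul_nonneg (by linarith [hy.out] : (0:ℝ) ≤ x - y) (Real.exp_pos _).le)]
    exact ZES.linexp_le hc hy.out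

lemma ZES.integral_linexp_le (hc : 0 < c) (x : ℝ) :
    ∫ y in Iic x, (x - y) * Real.exp (c*y) ≤ 4/c^2 * Real.exp (c*x) := by
  have h1 : ∫ y in Iic x, (x - y) * Real.exp (c*y)
      ≤ ∫ y in Iic x, ((2/c) * Real.exp (c/2*x)) * Real.exp (c/2*y) := by
    refine setIntegral_mono_on (ZES.integrableOn_linexp hc x)
      ((ZES.integrableOn_expc (by linarith : (0:ℝ) < c/2) x).const_mul _)
      measurableSet_Iic fun y hy => ZES.linexp_le hc hy.out
  refine h1.trans ?_
  rw [MeasureTheory.integral_const_mul, ZES.integral_expc (by linarith : (0:ℝ) < c/2) x]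
  have e2 : Real.exp (c*x) = Real.exp (c/2*x) * Real.exp (c/2*x) := by
    rw [← Real.exp_add]; ring_nf
  rw [e2]; apply le_of_eq; field_simp; ring

end ZES2

section ZES3
variable {c : ℝ}

lemma ZES.integrableOn_absexp (hc : 0 < c) (b : ℝ) :
    IntegrableOn (fun y => |y| * Real.exp (c*y)) (Iic b) := by
  refine Integrable.mono' ((ZES.integrableOn_linexp hc b).add
    ((ZES.integrableOn_expc hc b).const_mul |b|)) ?_ ?_
  · exact ((continuous_abs).mul
      (Real.continuous_exp.comp (continuous_const.mul continuous_id))).aestronglyMeasurable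
  · refine (ae_restrict_iff' measurableSet_Iic).2 (ae_of_all _ fun y hy => ?_)
    have h1 : |y| ≤ (b - y) + |b| := by
      rcases abs_cases y with ⟨h, _⟩ | ⟨h, _⟩ <;> rcases abs_cases b with ⟨h2, _⟩ | ⟨h2, _⟩ <;>
        simp only [h, h2] <;> linarith [hy.out]
    rw [Real.norm_of_nonneg (mul_nonneg (abs_nonneg _) (Real.exp_pos _).le)]
    have := (Real.exp_pos (c*y)).le
    simp only [Pi.add_apply]
    nlinarith

/-- The main estimate: if `|g y| ≤ Cg e^{c y}` on `Iic x` then the Volterra integrand is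
integrable and its integral of norm is at most `Cg (4/c²) e^{c x}`. -/
lemma ZES.key_bound {Cg : ℝ} (hc : 0 < c) (hCg : 0 ≤ Cg) {g : ℝ → ℝ} {x : ℝ}
    (hm : AEStronglyMeasurable g (volume.restrict (Iic x)))
    (hg : ∀ y ≤ x, |g y| ≤ Cg * Real.exp (c*y)) :
    IntegrableOn (fun y => (y - x) * g y) (Iic x) ∧
      (∫ y in Iic x, |(y - x) * g y|) ≤ Cg * (4/c^2) * Real.exp (c*x) := by
  have hGint : IntegrableOn (fun y => Cg * ((x - y) * Real.exp (c*y))) (Iic x) :=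
    (ZES.integrableOn_linexp hc x).const_mul Cg
  have hbd : ∀ y ∈ Iic x, |(y - x) * g y| ≤ Cg * ((x - y) * Real.exp (c*y)) := by
    intro y hy
    rw [abs_mul, abs_of_nonpos (by linarith [hy.out] : y - x ≤ 0)]
    calc -(y-x) * |g y| ≤ (x - y) * (Cg * Real.exp (c*y)) := by
          have := hg y hy.out
          have h0 : (0:ℝ) ≤ x - y := by linarith [hy.out]
          nlinarith [abs_nonneg (g y)]
    _ = Cg * ((x - y) * Real.exp (c*y)) := by ring
  have hint : IntegrableOn (fun y => (y - x) * g y) (Iic x) := by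
    refine Integrable.mono' hGint
      (((continuous_id.sub continuous_const).aestronglyMeasurable).mul hm) ?_
    exact (ae_restrict_iff' measurableSet_Iic).2 (ae_of_all _ fun y hy => hbd y hy)
  refine ⟨hint, ?_⟩
  have h2 : (∫ y in Iic x, |(y - x) * g y|) ≤ ∫ y in Iic x, Cg * ((x - y) * Real.exp (c*y)) :=
    setIntegral_mono_on hint.abs hGint measurableSet_Iic hbd
  refine h2.trans ?_
  rw [MeasureTheory.integral_const_mul]
  calc Cg * ∫ y in Iic x, (x - y) * Real.exp (c*y) ≤ Cg * (4/c^2 * Real.exp (c*x)) :=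
        mul_le_mul_of_nonneg_left (ZES.integral_linexp_le hc x) hCg
  _ = Cg * (4/c^2) * Real.exp (c*x) := by ring

/-- FTC for integrals over `Iic`. -/
lemma ZES.hasDerivAt_integral_Iic {g : ℝ → ℝ} (hg : Continuous g)
    (hint : ∀ b : ℝ, IntegrableOn g (Iic b)) (x : ℝ) :
    HasDerivAt (fun t => ∫ y in Iic t, g y) (g x) x := by
  have hx : x - 1 < x := by linarith
  have hii : IntervalIntegrable g volume (x-1) x :=
    (intervalIntegrable_iff_integrableOn_Ioc_of_le hx.le).2
      ((hint x).mono_set Ioc_subset_Iic_self)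
  have h1 : HasDerivAt (fun t => (∫ y in Iic (x-1), g y) + ∫ y in (x-1)..t, g y) (g x) x := by
    exact (HasDerivAt.const_add _
      (intervalIntegral.integral_hasDerivAt_right hii
        hg.stronglyMeasurable.stronglyMeasurableAtFilter hg.continuousAt))
  refine HasDerivAt.congr_of_eventuallyEq h1 ?_
  filter_upwards [eventually_gt_nhds hx] with t ht
  rw [intervalIntegral.integral_of_le ht.le, ← setIntegral_union (Iic_disjoint_Ioc le_rfl)
    measurableSet_Ioc (hint (x-1)) (((hint t).mono_set Ioc_subset_Iic_self)),
    Iic_union_Ioc_eq_Iic ht.le]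

end ZES3

namespace ZES

noncomputable def Kc (κ : ℝ) : ℕ → ℝ
  | 0 => 1
  | (n+1) => Kc κ n * κ / ((n:ℝ)+1)^2

lemma Kc_pos {κ : ℝ} (hκ : 0 < κ) : ∀ n, 0 < Kc κ n
  | 0 => one_pos
  | (n+1) => by
      have := Kc_pos hκ n
      simp only [Kc]; positivity

lemma summable_Kc {κ : ℝ} (hκ : 0 < κ) (r : ℝ) :
    Summable (fun n : ℕ => Kc κ n * Real.exp (n * r)) := by
  refine summable_of_ratio_norm_eventually_le (r := 1/2) (by norm_num) ?_
  obtain ⟨N, hN⟩ := exists_nat_gt (2 * κ * Real.exp r)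
  filter_upwards [eventually_ge_atTop N] with n hn
  have hKp := Kc_pos hκ
  have he : Real.exp (((n:ℝ)+1) * r) = Real.exp ((n:ℝ)*r) * Real.exp r := by
    rw [← Real.exp_add]; ring_nf
  have h1 : (0:ℝ) < ((n:ℝ)+1)^2 := by positivity
  have h2 : 2 * κ * Real.exp r ≤ ((n:ℝ)+1)^2 := by
    have : (N:ℝ) ≤ n := Nat.cast_le.2 hn
    nlinarith [sq_nonneg ((n:ℝ))]
  rw [Real.norm_of_nonneg (mul_nonneg (hKp _).le (Real.exp_pos _).le),
    Real.norm_of_nonneg (mul_nonneg (hKp _).le (Real.exp_pos _).le)]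
  have hK1 : Kc κ (n+1) = Kc κ n * κ / ((n:ℝ)+1)^2 := rfl
  have hcast : ((n+1 : ℕ):ℝ) = (n:ℝ)+1 := by push_cast; ring
  rw [hK1, hcast, he]
  rw [div_mul_eq_mul_div, div_le_iff₀ h1]
  have hexp := (Real.exp_pos ((n:ℝ)*r)).le
  nlinarith [mul_pos (hKp n) (Real.exp_pos ((n:ℝ)*r)), (Real.exp_pos r).le,
    mul_nonneg (mul_nonneg (hKp n).le hexp) (Real.exp_pos r).le]

lemma volterra_split {g : ℝ → ℝ} {x : ℝ} (hint2 : IntegrableOn (fun y => y * g y) (Iic x))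
    (hint : IntegrableOn g (Iic x)) :
    ∫ y in Iic x, (y - x) * g y = (∫ y in Iic x, y * g y) - x * ∫ y in Iic x, g y := by
  have h : ∀ y : ℝ, (y - x) * g y = y * g y - x * g y := fun y => by ring
  simp_rw [h]
  rw [integral_sub hint2 (hint.const_mul x), MeasureTheory.integral_const_mul]

lemma hasDerivAt_volterra {g : ℝ → ℝ} (hg : Continuous g)
    (hint : ∀ b : ℝ, IntegrableOn g (Iic b))
    (hint2 : ∀ b : ℝ, IntegrableOn (fun y => y * g y) (Iic b)) (x : ℝ) :
    HasDerivAt (fun t => ∫ y in Iic t, (y - t) * g y) (-∫ y in Iic x, g y) x := by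
  have hB := hasDerivAt_integral_Iic (continuous_id.mul hg) hint2 x
  have hA := hasDerivAt_integral_Iic hg hint x
  have key := hB.sub ((hasDerivAt_id x).mul hA)
  have hfun : (fun t => ∫ y in Iic t, (y - t) * g y)
      = (fun t => (∫ y in Iic t, y * g y) - t * ∫ y in Iic t, g y) :=
    funext fun t => volterra_split (hint2 t) (hint t)
  rw [hfun]
  have key' : HasDerivAt (fun t => (∫ y in Iic t, y * g y) - t * ∫ y in Iic t, g y)
      (x * g x - ((1 * ∫ y in Iic x, g y) + x * g x)) x := key
  convert key' using 1
  ring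

end ZES

namespace ZES

noncomputable def useq (W : ℝ → ℝ) : ℕ → ℝ → ℝ
  | 0 => fun _ => 1
  | (n+1) => fun x => -∫ y in Iic x, (y - x) * (W y * useq W n y)

lemma integrable_of_expbound {c' Cg : ℝ} (hc' : 0 < c') (hCg : 0 ≤ Cg) {g : ℝ → ℝ} {b : ℝ}
    (hgm : AEStronglyMeasurable g (volume.restrict (Iic b)))
    (hgb : ∀ y ≤ b, |g y| ≤ Cg * Real.exp (c'*y)) :
    IntegrableOn g (Iic b) ∧ IntegrableOn (fun y => y * g y) (Iic b) := by
  constructor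
  · refine Integrable.mono' ((ZES.integrableOn_expc hc' b).const_mul Cg) hgm ?_
    exact (ae_restrict_iff' measurableSet_Iic).2 (ae_of_all _ fun y hy => hgb y hy.out)
  · refine Integrable.mono' ((ZES.integrableOn_absexp hc' b).const_mul Cg)
      ((aestronglyMeasurable_id.restrict).mul hgm) ?_
    refine (ae_restrict_iff' measurableSet_Iic).2 (ae_of_all _ fun y hy => ?_)
    rw [Real.norm_eq_abs, abs_mul]
    have h1 := hgb y hy.out
    have h2 : (0:ℝ) ≤ |y| := abs_nonneg y
    nlinarith [abs_nonneg (g y), Real.exp_pos (c'*y)]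

/-- algebra of the recursion constant -/
lemma step_const_eq {c C : ℝ} (hc : 0 < c) (n : ℕ) (x : ℝ) :
    (C * Kc (4*C/c^2) n) * (4/((((n:ℝ)+1)*c)^2)) * Real.exp ((((n:ℝ)+1)*c)*x)
      = Kc (4*C/c^2) (n+1) * Real.exp (((n+1:ℕ):ℝ)*(c*x)) := by
  have h1 : Real.exp ((((n:ℝ)+1)*c)*x) = Real.exp (((n+1:ℕ):ℝ)*(c*x)) := by
    push_cast; ring_nf
  rw [h1]
  congr 1
  show _ = Kc (4*C/c^2) n * (4*C/c^2) / ((n:ℝ)+1)^2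
  have hn1 : ((n:ℝ)+1) ≠ 0 := by positivity
  field_simp

lemma useq_cont_bound {c C : ℝ} {W : ℝ → ℝ} (hc : 0 < c) (hC : 0 < C) (hW : Continuous W)
    (hWb : ∀ y, |W y| ≤ C * Real.exp (c*y)) (n : ℕ) :
    Continuous (useq W n) ∧ ∀ x, |useq W n x| ≤ Kc (4*C/c^2) n * Real.exp ((n:ℝ) * (c*x)) := by
  induction n with
  | zero => refine ⟨continuous_const, fun x => ?_⟩; simp [useq, Kc]
  | succ n ih =>
    obtain ⟨hcont, hbd⟩ := ih
    set κ := 4*C/c^2 with hκdef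
    set c' := ((n:ℝ)+1)*c with hc'def
    have hc' : 0 < c' := by positivity
    have hKn : 0 < Kc κ n := Kc_pos (by positivity) n
    set g : ℝ → ℝ := fun y => W y * useq W n y with hgdef
    have hgc : Continuous g := hW.mul hcont
    have hgb : ∀ y : ℝ, |g y| ≤ (C * Kc κ n) * Real.exp (c'*y) := by
      intro y
      have h1 := hWb y
      have h2 := hbd y
      have h3 : Real.exp (c'*y) = Real.exp (c*y) * Real.exp ((n:ℝ)*(c*y)) := by
        rw [← Real.exp_add, hc'def]; ring_nf
      rw [hgdef]
      calc |W y * useq W n y| = |W y| * |useq W n y| := abs_mul _ _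
      _ ≤ (C * Real.exp (c*y)) * (Kc κ n * Real.exp ((n:ℝ)*(c*y))) := by
          apply mul_le_mul h1 h2 (abs_nonneg _)
          positivity
      _ = (C * Kc κ n) * Real.exp (c'*y) := by rw [h3]; ring
    have hCg : (0:ℝ) ≤ C * Kc κ n := by positivity
    -- continuity
    have hint := fun b => (integrable_of_expbound hc' hCg hgc.aestronglyMeasurable.restrict
      (fun y _ => hgb y) (b := b))
    have hDA := fun x => hasDerivAt_volterra hgc (fun b => (hint b).1) (fun b => (hint b).2) x
    have hucont : Continuous (useq W (n+1)) := by
      have : useq W (n+1) = fun x => -∫ y in Iic x, (y - x) * g y := rfl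
      rw [this]
      exact continuous_iff_continuousAt.2 fun x => ((hDA x).continuousAt).neg
    refine ⟨hucont, fun x => ?_⟩
    have hkb := ZES.key_bound hc' hCg hgc.aestronglyMeasurable.restrict (fun y _ => hgb y) (x := x)
    have h4 : |useq W (n+1) x| ≤ ∫ y in Iic x, |(y - x) * g y| := by
      have : useq W (n+1) x = -∫ y in Iic x, (y - x) * g y := rfl
      rw [this, abs_neg]
      simpa only [Real.norm_eq_abs] using
        MeasureTheory.norm_integral_le_integral_norm (fun y => (y - x) * g y) (μ := volume.restrict (Iic x))
    calc |useq W (n+1) x| ≤ (C * Kc κ n) * (4/c'^2) * Real.exp (c'*x) := h4.trans hkb.2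
    _ = Kc κ (n+1) * Real.exp (((n+1:ℕ):ℝ)*(c*x)) := step_const_eq hc n x

end ZES

namespace ZES

theorem construction {c C : ℝ} {W : ℝ → ℝ} (hc : 0 < c) (hC : 0 < C) (hW : Continuous W)
    (hWb : ∀ y, |W y| ≤ C * Real.exp (c*y)) :
    ∃ ψ : ℝ → ℝ, Continuous ψ ∧
      (∀ b x, x ≤ b → |ψ x| ≤ ∑' n : ℕ, Kc (4*C/c^2) n * Real.exp ((n:ℝ)*(c*b))) ∧
      (∀ x, ψ x = 1 - ∫ y in Iic x, (y - x) * (W y * ψ y)) ∧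
      (∀ x, deriv (deriv ψ) x = W x * ψ x) := by
  set κ := 4*C/c^2 with hκdef
  have hκ : 0 < κ := by positivity
  have hu := fun n => useq_cont_bound hc hC hW hWb n
  set ψ : ℝ → ℝ := fun x => ∑' n, useq W n x with hψdef
  have hmono : ∀ (n : ℕ) {x b : ℝ}, x ≤ b →
      Kc κ n * Real.exp ((n:ℝ)*(c*x)) ≤ Kc κ n * Real.exp ((n:ℝ)*(c*b)) := by
    intro n x b hxb
    have : (n:ℝ)*(c*x) ≤ (n:ℝ)*(c*b) :=
      mul_le_mul_of_nonneg_left (mul_le_mul_of_nonneg_left hxb hc.le) (Nat.cast_nonneg n)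
    exact mul_le_mul_of_nonneg_left (Real.exp_le_exp.2 this) (Kc_pos hκ n).le
  have hsumnorm : ∀ x : ℝ, Summable (fun n => ‖useq W n x‖) := by
    intro x
    refine Summable.of_nonneg_of_le (fun n => norm_nonneg _) (fun n => ?_) (summable_Kc hκ (c*x))
    simpa [Real.norm_eq_abs] using (hu n).2 x
  have hsum : ∀ x : ℝ, Summable (fun n => useq W n x) := fun x => (hsumnorm x).of_norm
  have hψb : ∀ b x, x ≤ b → |ψ x| ≤ ∑' n : ℕ, Kc κ n * Real.exp ((n:ℝ)*(c*b)) := by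
    intro b x hxb
    calc |ψ x| ≤ ∑' n, ‖useq W n x‖ := by
          simpa [Real.norm_eq_abs] using norm_tsum_le_tsum_norm (hsumnorm x)
    _ ≤ ∑' n : ℕ, Kc κ n * Real.exp ((n:ℝ)*(c*b)) := by
        refine Summable.tsum_le_tsum (fun n => ?_) (hsumnorm x) (summable_Kc hκ (c*b))
        calc ‖useq W n x‖ ≤ Kc κ n * Real.exp ((n:ℝ)*(c*x)) := by
              simpa [Real.norm_eq_abs] using (hu n).2 x
        _ ≤ _ := hmono n hxb
  have hψcont : Continuous ψ := by
    refine continuous_iff_continuousAt.2 fun x => ?_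
    have hT := tendstoUniformlyOn_tsum (f := fun n y => useq W n y)
      (summable_Kc hκ (c*(x+1))) (fun n y hy => by
        simpa [Real.norm_eq_abs] using ((hu n).2 y).trans (hmono n hy.out)) (s := Iic (x+1))
    exact (hT.continuousOn (Filter.Eventually.of_forall fun t =>
      (continuous_finset_sum t fun i _ => (hu i).1).continuousOn).frequently).continuousAt
      (Iic_mem_nhds (lt_add_one x))
  -- the integral equation
  have hgb' : ∀ (n : ℕ) (y : ℝ), |W y * useq W n y|
      ≤ (C * Kc κ n) * Real.exp (((((n:ℝ)+1))*c)*y) := by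
    intro n y
    have h3 : Real.exp ((((n:ℝ)+1)*c)*y) = Real.exp (c*y) * Real.exp ((n:ℝ)*(c*y)) := by
      rw [← Real.exp_add]; ring_nf
    calc |W y * useq W n y| = |W y| * |useq W n y| := abs_mul _ _
    _ ≤ (C * Real.exp (c*y)) * (Kc κ n * Real.exp ((n:ℝ)*(c*y))) := by
        refine mul_le_mul (hWb y) ((hu n).2 y) (abs_nonneg _) ?_
        positivity
    _ = (C * Kc κ n) * Real.exp ((((n:ℝ)+1)*c)*y) := by rw [h3]; ring
  have hinteq : ∀ x : ℝ, (∫ y in Iic x, (y - x) * (W y * ψ y)) = 1 - ψ x := by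
    intro x
    have hc' : ∀ n : ℕ, (0:ℝ) < ((n:ℝ)+1)*c := fun n => by positivity
    have hCg : ∀ n : ℕ, (0:ℝ) ≤ C * Kc κ n := fun n => by
      have := (Kc_pos hκ n).le; positivity
    have hkb := fun n => ZES.key_bound (hc' n) (hCg n)
      ((hW.mul (hu n).1).aestronglyMeasurable.restrict) (fun y _ => hgb' n y) (x := x)
    have hswap := MeasureTheory.integral_tsum_of_summable_integral_norm
      (μ := volume.restrict (Iic x)) (F := fun n y => (y - x) * (W y * useq W n y))
      (fun n => (hkb n).1) ?_
    · have hpt : ∀ y : ℝ, (∑' n, (y - x) * (W y * useq W n y)) = (y - x) * (W y * ψ y) := by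
        intro y
        calc (∑' n, (y - x) * (W y * useq W n y))
            = ∑' n, ((y - x) * W y) * useq W n y := tsum_congr fun n => by ring
        _ = ((y - x) * W y) * ∑' n, useq W n y := tsum_mul_left
        _ = (y - x) * (W y * ψ y) := by rw [hψdef]; ring
      have hup : ∀ n : ℕ, (∫ y in Iic x, (y - x) * (W y * useq W n y)) = -useq W (n+1) x := by
        intro n
        have : useq W (n+1) x = -∫ y in Iic x, (y - x) * (W y * useq W n y) := rfl
        rw [this, neg_neg]
      have hshift : (∑' n, useq W (n+1) x) = ψ x - 1 := by
        have h0 := Summable.tsum_eq_zero_add (hsum x)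
        have : useq W 0 x = 1 := rfl
        rw [this] at h0
        rw [hψdef]; simp only; linarith [h0]
      calc (∫ y in Iic x, (y - x) * (W y * ψ y))
          = ∫ y in Iic x, ∑' n, (y - x) * (W y * useq W n y) := by
            refine setIntegral_congr_fun measurableSet_Iic fun y _ => (hpt y).symm
      _ = ∑' n, ∫ y in Iic x, (y - x) * (W y * useq W n y) := hswap.symm
      _ = ∑' n, -useq W (n+1) x := tsum_congr hup
      _ = -(ψ x - 1) := by rw [tsum_neg, hshift]
      _ = 1 - ψ x := by ring
    · refine Summable.of_nonneg_of_le (fun n => ?_) (fun n => ?_)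
        (((summable_nat_add_iff 1).2 (summable_Kc hκ (c*x))))
      · exact MeasureTheory.integral_nonneg fun y => norm_nonneg _
      · calc (∫ y in Iic x, ‖(y - x) * (W y * useq W n y)‖)
            = ∫ y in Iic x, |(y - x) * (W y * useq W n y)| := by
              simp only [Real.norm_eq_abs]
        _ ≤ (C * Kc κ n) * (4/((((n:ℝ)+1)*c)^2)) * Real.exp ((((n:ℝ)+1)*c)*x) := (hkb n).2
        _ = Kc κ (n+1) * Real.exp (((n+1:ℕ):ℝ)*(c*x)) := step_const_eq hc n x
  have hψeq : ∀ x, ψ x = 1 - ∫ y in Iic x, (y - x) * (W y * ψ y) := by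
    intro x; rw [hinteq x]; ring
  -- derivatives
  have hS1 : ∀ b : ℝ, 1 ≤ ∑' n : ℕ, Kc κ n * Real.exp ((n:ℝ)*(c*b)) := by
    intro b
    have := Summable.le_tsum (summable_Kc hκ (c*b)) 0 (fun i _ =>
      mul_nonneg (Kc_pos hκ i).le (Real.exp_pos _).le)
    simpa [Kc] using this
  set g : ℝ → ℝ := fun y => W y * ψ y with hgdef
  have hgc : Continuous g := hW.mul hψcont
  have hgint : ∀ b : ℝ, IntegrableOn g (Iic b) ∧ IntegrableOn (fun y => y * g y) (Iic b) := by
    intro b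
    set Sb := ∑' n : ℕ, Kc κ n * Real.exp ((n:ℝ)*(c*b)) with hSbdef
    refine integrable_of_expbound hc (by nlinarith [hS1 b, hC.le] : (0:ℝ) ≤ C * Sb)
      hgc.aestronglyMeasurable.restrict (fun y hy => ?_)
    calc |g y| = |W y| * |ψ y| := abs_mul _ _
    _ ≤ (C * Real.exp (c*y)) * Sb := by
        refine mul_le_mul (hWb y) (hψb b y hy) (abs_nonneg _) ?_
        positivity
    _ = (C * Sb) * Real.exp (c*y) := by ring
  have hψD : ∀ x : ℝ, HasDerivAt ψ (∫ y in Iic x, g y) x := by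
    intro x
    have hDA := hasDerivAt_volterra hgc (fun b => (hgint b).1) (fun b => (hgint b).2) x
    have h1 := (hasDerivAt_const x (1:ℝ)).sub hDA
    have hfun : ((fun _ => (1:ℝ)) - fun t => ∫ y in Iic t, (y - t) * g y) = ψ := by
      funext t; rw [Pi.sub_apply, hψeq t]
    rw [hfun] at h1
    simpa using h1
  have hd1 : deriv ψ = fun x => ∫ y in Iic x, g y := funext fun x => (hψD x).deriv
  have hd2 : ∀ x, deriv (deriv ψ) x = W x * ψ x := by
    intro x
    rw [hd1]
    exact (hasDerivAt_integral_Iic hgc (fun b => (hgint b).1) x).deriv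
  exact ⟨ψ, hψcont, hψb, hψeq, hd2⟩

end ZES

namespace ZES

section saga
variable {c C B a : ℝ} {V φ : ℝ → ℝ}

lemma intg_of_meas (hc : 0 < c) (hCB : 0 ≤ C * B)
    (hVb : ∀ y ≤ a, |V y| ≤ C * Real.exp (c*y)) (hB : ∀ x ≤ a, |φ x| ≤ B)
    {x : ℝ} (hxa : x ≤ a)
    (hm : AEStronglyMeasurable (fun y => V y * φ y) (volume.restrict (Iic x))) :
    IntegrableOn (fun y => (y - x) * (V y * φ y)) (Iic x) := by
  refine Integrable.mono' ((ZES.integrableOn_linexp hc x).const_mul (C*B))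
    (((continuous_id.sub continuous_const).aestronglyMeasurable.restrict).mul hm) ?_
  refine (ae_restrict_iff' measurableSet_Iic).2 (ae_of_all _ fun y hy => ?_)
  have hya : y ≤ a := le_trans hy.out hxa
  have h1 := hVb y hya
  have h2 := hB y hya
  have h3 : (0:ℝ) ≤ x - y := by linarith [hy.out]
  rw [Real.norm_eq_abs, abs_mul, abs_mul, abs_of_nonpos (by linarith [hy.out] : y - x ≤ 0)]
  have he := (Real.exp_pos (c*y)).le
  nlinarith [abs_nonneg (V y), abs_nonneg (φ y), mul_le_mul h1 h2 (abs_nonneg (φ y))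
    (le_trans (abs_nonneg (V y)) h1)]

lemma meas_of_intg {x : ℝ}
    (hI : IntegrableOn (fun y => (y - x) * (V y * φ y)) (Iic x)) :
    AEStronglyMeasurable (fun y => V y * φ y) (volume.restrict (Iic x)) := by
  have h1 := hI.aestronglyMeasurable
  have h2 : AEStronglyMeasurable
      (fun y => ((y - x) * (V y * φ y)) * (y - x)⁻¹) (volume.restrict (Iic x)) :=
    h1.mul (((continuous_id.sub continuous_const).measurable.inv).aestronglyMeasurable)
  refine h2.congr ?_
  have hne : ∀ᵐ y : ℝ ∂(volume.restrict (Iic x)), y ≠ x := by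
    refine ae_restrict_of_ae ?_
    rw [MeasureTheory.ae_iff]
    simp only [ne_eq, not_not, setOf_eq_eq_singleton]
    exact Real.volume_singleton
  filter_upwards [hne] with y hy
  have : y - x ≠ 0 := sub_ne_zero.2 hy
  field_simp

lemma saga (hc : 0 < c) (hC : 0 < C)
    (hV : Continuous V) (hVb : ∀ y ≤ a, |V y| ≤ C * Real.exp (c*y))
    (hB : ∀ x ≤ a, |φ x| ≤ B)
    (heq : ∀ x ≤ a, φ x = 1 - ∫ y in Iic x, (y - x) * (V y * φ y)) :
    ∀ x ≤ a, IntegrableOn (fun y => (y - x) * (V y * φ y)) (Iic x) := by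
  have hB0 : 0 ≤ B := le_trans (abs_nonneg _) (hB a le_rfl)
  have hCB : 0 ≤ C * B := mul_nonneg hC.le hB0
  set s : Set ℝ := {x | x ≤ a ∧ IntegrableOn (fun y => (y - x) * (V y * φ y)) (Iic x)}
    with hsdef
  by_cases hs : s.Nonempty
  · obtain ⟨x₀, hx₀a, hx₀I⟩ := hs
    have hbdd : BddAbove s := ⟨a, fun z hz => hz.1⟩
    set τ := sSup s with hτdef
    have hτa : τ ≤ a := csSup_le ⟨x₀, hx₀a, hx₀I⟩ fun z hz => hz.1
    -- downward closure
    have hdown : ∀ x' ≤ a, ∀ x ∈ s, x' ≤ x →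
        IntegrableOn (fun y => (y - x') * (V y * φ y)) (Iic x') := by
      intro x' hx'a x hx hle
      have hm := (meas_of_intg hx.2).mono_measure
        (Measure.restrict_mono (Iic_subset_Iic.2 hle) le_rfl)
      exact intg_of_meas hc hCB hVb hB hx'a hm
    -- measurability on Iio τ
    have hmeasIio : AEStronglyMeasurable (fun y => V y * φ y) (volume.restrict (Iio τ)) := by
      have hcover : Iio τ = ⋃ n : ℕ, Iic (τ - 1/((n:ℝ)+1)) := by
        ext y
        simp only [mem_Iio, mem_iUnion, mem_Iic]
        constructor
        · intro hy
          obtain ⟨n, hn⟩ := exists_nat_one_div_lt (sub_pos.2 hy)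
          exact ⟨n, by linarith⟩
        · rintro ⟨n, hn⟩
          have : (0:ℝ) < 1/((n:ℝ)+1) := by positivity
          linarith
      rw [hcover, aestronglyMeasurable_iUnion_iff]
      intro n
      have hlt : τ - 1/((n:ℝ)+1) < τ := by
        have : (0:ℝ) < 1/((n:ℝ)+1) := by positivity
        linarith
      obtain ⟨z, hzs, hzlt⟩ := exists_lt_of_lt_csSup (⟨x₀, ⟨hx₀a, hx₀I⟩⟩ : s.Nonempty) hlt
      exact meas_of_intg (hdown _ (by linarith) z hzs hzlt.le)
    -- measurability on Icc τ a, hence on Iic a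
    have hone : ∀ y ∈ Ioc τ a, φ y = 1 := by
      intro y hy
      have hys : y ∉ s := fun hmem => absurd (le_csSup hbdd hmem) (not_le.2 hy.1)
      have hnint : ¬ IntegrableOn (fun z => (z - y) * (V z * φ z)) (Iic y) := fun hI =>
        hys ⟨hy.2, hI⟩
      rw [heq y hy.2, MeasureTheory.integral_undef hnint, sub_zero]
    have h2 : AEStronglyMeasurable (fun y => V y * φ y) (volume.restrict (Icc τ a)) := by
      rw [← Measure.restrict_congr_set Ioc_ae_eq_Icc]
      refine (hV.aestronglyMeasurable.restrict).congr ?_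
      refine (ae_restrict_iff' measurableSet_Ioc).2 (ae_of_all _ fun y hy => ?_)
      show V y = V y * φ y
      rw [hone y hy, mul_one]
    have hmeasIic : AEStronglyMeasurable (fun y => V y * φ y) (volume.restrict (Iic a)) := by
      have h3 := (aestronglyMeasurable_union_iff).2 ⟨hmeasIio, h2⟩
      rwa [Iio_union_Icc_eq_Iic hτa] at h3
    intro x hxa
    exact intg_of_meas hc hCB hVb hB hxa
      (hmeasIic.mono_measure (Measure.restrict_mono (Iic_subset_Iic.2 hxa) le_rfl))
  · exfalso
    have hphi1 : ∀ x ≤ a, φ x = 1 := by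
      intro x hxa
      have : ¬ IntegrableOn (fun y => (y - x) * (V y * φ y)) (Iic x) := by
        intro hI; exact hs ⟨x, hxa, hI⟩
      rw [heq x hxa, MeasureTheory.integral_undef this, sub_zero]
    have : IntegrableOn (fun y => (y - a) * (V y * φ y)) (Iic a) := by
      have hint0 : IntegrableOn (fun y => (y - a) * (V y * (1:ℝ))) (Iic a) := by
        refine Integrable.mono' ((ZES.integrableOn_linexp hc a).const_mul C)
          (((continuous_id.sub continuous_const).mul (hV.mul continuous_const)).aestronglyMeasurable.restrict) ?_
        refine (ae_restrict_iff' measurableSet_Iic).2 (ae_of_all _ fun y hy => ?_)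
        have h1 := hVb y hy.out
        have h3 : (0:ℝ) ≤ a - y := by linarith [hy.out]
        rw [Real.norm_eq_abs, abs_mul, abs_mul, abs_of_nonpos (by linarith [hy.out] : y - a ≤ 0)]
        have he := (Real.exp_pos (c*y)).le
        simp only [abs_one, mul_one]
        nlinarith [abs_nonneg (V y)]
      exact hint0.congr_fun (fun y hy => by rw [hphi1 y hy.out]) measurableSet_Iic
    exact hs ⟨a, le_rfl, this⟩

end saga
end ZES

/-- Construction of the zero-energy solution near `-∞`: if `|V(y)| ≤ C e^{y/(4M)}` for
`y ≤ a`, there is a solution `ψ₁` of `-ψ'' + Vψ = 0` on `(-∞, a]` with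
`|ψ₁(x) - 1| ≤ C' e^{x/(8M)}`, obtained as the unique bounded solution of the Volterra
equation `ψ₁(x) = 1 - ∫_{-∞}^x (y - x) V(y) ψ₁(y) dy`. -/
theorem zero_energy_solution_near_horizon (M : ℝ) (hM : 0 < M) (a C : ℝ) (hC : 0 < C)
    (V : ℝ → ℝ) (hV : Continuous V)
    (hVb : ∀ y ≤ a, |V y| ≤ C * Real.exp (y / (4*M))) :
    ∃ ψ : ℝ → ℝ,
      (∀ x ≤ a, -(deriv (deriv ψ) x) + V x * ψ x = 0) ∧
      (∃ C' > 0, ∀ x ≤ a, |ψ x - 1| ≤ C' * Real.exp (x / (8*M))) ∧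
      (∀ x ≤ a, ψ x = 1 - ∫ y in Set.Iic x, (y - x) * V y * ψ y) ∧
      (∀ ψ' : ℝ → ℝ, (∃ B, ∀ x ≤ a, |ψ' x| ≤ B) →
        (∀ x ≤ a, ψ' x = 1 - ∫ y in Set.Iic x, (y - x) * V y * ψ' y) →
        ∀ x ≤ a, ψ' x = ψ x) := by
  have h4M : (0:ℝ) < 4*M := by linarith
  set c : ℝ := 1/(4*M) with hcdef
  have hc : 0 < c := by positivity
  have hdiv : ∀ x : ℝ, x/(4*M) = c*x := fun x => by rw [hcdef]; ring
  have hVb' : ∀ y ≤ a, |V y| ≤ C * Real.exp (c*y) := fun y hy => by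
    have := hVb y hy; rwa [hdiv] at this
  set W : ℝ → ℝ := fun y => V (min y a) with hWdef
  have hWc : Continuous W := hV.comp (continuous_id.min continuous_const)
  have hWb : ∀ y, |W y| ≤ C * Real.exp (c*y) := by
    intro y
    refine (hVb' (min y a) (min_le_right y a)).trans ?_
    exact mul_le_mul_of_nonneg_left
      (Real.exp_le_exp.2 (mul_le_mul_of_nonneg_left (min_le_left y a) hc.le)) hC.le
  have hWV : ∀ x ≤ a, W x = V x := fun x hx => by rw [hWdef]; simp [min_eq_left hx]
  obtain ⟨ψ, hψcont, hψb, hψeq, hd2⟩ := ZES.construction hc hC hWc hWb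
  set κ := 4*C/c^2 with hκdef
  have hκ : 0 < κ := by positivity
  set Sa : ℝ := ∑' n : ℕ, ZES.Kc κ n * Real.exp ((n:ℝ)*(c*a)) with hSadef
  have hSa1 : 1 ≤ Sa := by
    have := Summable.le_tsum (ZES.summable_Kc hκ (c*a)) 0 (fun i _ =>
      mul_nonneg (ZES.Kc_pos hκ i).le (Real.exp_pos _).le)
    simpa [ZES.Kc] using this
  have hSa0 : 0 < Sa := lt_of_lt_of_le one_pos hSa1
  have hψSa : ∀ y ≤ a, |ψ y| ≤ Sa := fun y hy => hψb a y hy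
  -- the W and V integrands agree below a
  have hVW_int : ∀ x ≤ a, (∫ y in Iic x, (y - x) * (V y * ψ y))
      = ∫ y in Iic x, (y - x) * (W y * ψ y) := by
    intro x hx
    refine setIntegral_congr_fun measurableSet_Iic fun y hy => ?_
    rw [hWV y (le_trans hy.out hx)]
  have hψeqV : ∀ x ≤ a, ψ x = 1 - ∫ y in Iic x, (y - x) * (V y * ψ y) := by
    intro x hx; rw [hψeq x, hVW_int x hx]
  -- bound on the V ψ product
  have hgbV : ∀ y ≤ a, |V y * ψ y| ≤ (C * Sa) * Real.exp (c*y) := by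
    intro y hy
    calc |V y * ψ y| = |V y| * |ψ y| := abs_mul _ _
    _ ≤ (C * Real.exp (c*y)) * Sa :=
        mul_le_mul (hVb' y hy) (hψSa y hy) (abs_nonneg _) (by positivity)
    _ = (C * Sa) * Real.exp (c*y) := by ring
  have hIntψ : ∀ x ≤ a, IntegrableOn (fun y => (y - x) * (V y * ψ y)) (Iic x) := by
    intro x hx
    exact (ZES.key_bound hc (by positivity) ((hV.mul hψcont).aestronglyMeasurable.restrict)
      (fun y hy => hgbV y (le_trans hy hx))).1
  refine ⟨ψ, ?_, ?_, ?_, ?_⟩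
  · -- ODE
    intro x hx
    rw [hd2 x, hWV x hx]
    ring
  · -- decay
    refine ⟨(C * Sa) * (4/c^2) * Real.exp (a/(8*M)), by positivity, ?_⟩
    intro x hx
    have h1 : ψ x - 1 = -(∫ y in Iic x, (y - x) * (V y * ψ y)) := by
      rw [hψeqV x hx]; ring
    rw [h1, abs_neg]
    have hkb := ZES.key_bound hc (by positivity : (0:ℝ) ≤ C * Sa)
      ((hV.mul hψcont).aestronglyMeasurable.restrict)
      (fun y hy => hgbV y (le_trans hy hx)) (x := x)
    have h2 : |∫ y in Iic x, (y - x) * (V y * ψ y)| ≤ (C * Sa) * (4/c^2) * Real.exp (c*x) := by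
      refine le_trans ?_ hkb.2
      simpa only [Real.norm_eq_abs, Pi.mul_apply] using
        MeasureTheory.norm_integral_le_integral_norm (fun y => (y - x) * (V y * ψ y))
          (μ := volume.restrict (Iic x))
    refine h2.trans ?_
    have h3 : c*x ≤ a/(8*M) + x/(8*M) := by
      rw [hcdef]
      have : x / (8*M) ≤ a / (8*M) :=
        (div_le_div_iff_of_pos_right (by linarith)).2 hx
      have hx8 : 1/(4*M) * x = x/(8*M) + x/(8*M) := by field_simp; ring
      linarith [hx8]
    calc (C * Sa) * (4/c^2) * Real.exp (c*x)
        ≤ (C * Sa) * (4/c^2) * Real.exp (a/(8*M) + x/(8*M)) := by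
          refine mul_le_mul_of_nonneg_left (Real.exp_le_exp.2 h3) (by positivity)
    _ = (C * Sa) * (4/c^2) * Real.exp (a/(8*M)) * Real.exp (x/(8*M)) := by
          rw [Real.exp_add]; ring
  · -- integral equation
    intro x hx
    rw [hψeqV x hx]
    congr 1
    refine setIntegral_congr_fun measurableSet_Iic fun y _ => ?_
    ring
  · -- uniqueness
    rintro φ ⟨B, hB⟩ heqφ
    have heqφ' : ∀ x ≤ a, φ x = 1 - ∫ y in Iic x, (y - x) * (V y * φ y) := by
      intro x hx
      have := heqφ x hx
      rw [this]
      congr 1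
      refine MeasureTheory.integral_congr_ae (ae_of_all _ fun y => ?_)
      ring
    have hIntφ := ZES.saga hc hC hV hVb' hB heqφ'
    have hB0 : 0 ≤ B := le_trans (abs_nonneg _) (hB a le_rfl)
    set D : ℝ := B + Sa with hDdef
    have hD0 : 0 ≤ D := by positivity
    have hD : ∀ y ≤ a, |φ y - ψ y| ≤ D := by
      intro y hy
      calc |φ y - ψ y| ≤ |φ y| + |ψ y| := abs_sub _ _
      _ ≤ B + Sa := add_le_add (hB y hy) (hψSa y hy)
    have hrec : ∀ n : ℕ, ∀ x ≤ a, |φ x - ψ x| ≤ D * (ZES.Kc κ n * Real.exp ((n:ℝ)*(c*x))) := by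
      intro n
      induction n with
      | zero => intro x hx; simpa [ZES.Kc] using hD x hx
      | succ n ihn =>
        intro x hx
        have hδeq : φ x - ψ x = -∫ y in Iic x, (y - x) * (V y * (φ y - ψ y)) := by
          have h1 : (∫ y in Iic x, (y - x) * (V y * φ y))
              - (∫ y in Iic x, (y - x) * (V y * ψ y))
              = ∫ y in Iic x, (y - x) * (V y * (φ y - ψ y)) := by
            rw [← integral_sub (hIntφ x hx) (hIntψ x hx)]
            refine setIntegral_congr_fun measurableSet_Iic fun y _ => ?_
            ring
          rw [heqφ' x hx, hψeqV x hx]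
          linarith [h1]
        set c' : ℝ := ((n:ℝ)+1)*c with hc'def
        have hc' : 0 < c' := by positivity
        have hKn := ZES.Kc_pos hκ n
        have hCg : (0:ℝ) ≤ C * (D * ZES.Kc κ n) := by positivity
        have hm : AEStronglyMeasurable (fun y => V y * (φ y - ψ y))
            (volume.restrict (Iic x)) := by
          have h2 : (fun y => V y * (φ y - ψ y)) = fun y => V y * φ y - V y * ψ y := by
            funext y; ring
          rw [h2]
          exact (ZES.meas_of_intg (hIntφ x hx)).sub
            ((hV.mul hψcont).aestronglyMeasurable.restrict)
        have hg : ∀ y ≤ x, |V y * (φ y - ψ y)| ≤ (C * (D * ZES.Kc κ n)) * Real.exp (c'*y) := by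
          intro y hy
          have hya : y ≤ a := le_trans hy hx
          have h3 : Real.exp (c'*y) = Real.exp (c*y) * Real.exp ((n:ℝ)*(c*y)) := by
            rw [← Real.exp_add]; rw [hc'def]; ring_nf
          calc |V y * (φ y - ψ y)| = |V y| * |φ y - ψ y| := abs_mul _ _
          _ ≤ (C * Real.exp (c*y)) * (D * (ZES.Kc κ n * Real.exp ((n:ℝ)*(c*y)))) :=
              mul_le_mul (hVb' y hya) (ihn y hya) (abs_nonneg _) (by positivity)
          _ = (C * (D * ZES.Kc κ n)) * Real.exp (c'*y) := by rw [h3]; ring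
        have hkb := ZES.key_bound hc' hCg hm hg (x := x)
        rw [hδeq, abs_neg]
        have h4 : |∫ y in Iic x, (y - x) * (V y * (φ y - ψ y))|
            ≤ (C * (D * ZES.Kc κ n)) * (4/c'^2) * Real.exp (c'*x) := by
          refine le_trans ?_ hkb.2
          simpa only [Real.norm_eq_abs] using
            MeasureTheory.norm_integral_le_integral_norm
              (fun y => (y - x) * (V y * (φ y - ψ y))) (μ := volume.restrict (Iic x))
        refine h4.trans (le_of_eq ?_)
        have h5 := ZES.step_const_eq (C := C) hc n x
        rw [hc'def]
        calc (C * (D * ZES.Kc κ n)) * (4/((((n:ℝ)+1)*c)^2)) * Real.exp ((((n:ℝ)+1)*c)*x)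
            = D * ((C * ZES.Kc κ n) * (4/((((n:ℝ)+1)*c)^2)) * Real.exp ((((n:ℝ)+1)*c)*x)) := by
              ring
        _ = D * (ZES.Kc κ (n+1) * Real.exp (((n+1:ℕ):ℝ)*(c*x))) := by rw [h5]
    intro x hx
    have hlim : Tendsto (fun n : ℕ => D * (ZES.Kc κ n * Real.exp ((n:ℝ)*(c*x)))) atTop (𝓝 0) := by
      have := (ZES.summable_Kc hκ (c*x)).tendsto_atTop_zero
      simpa using this.const_mul D
    have hle : |φ x - ψ x| ≤ 0 := ge_of_tendsto' hlim (fun n => hrec n x hx)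
    have := abs_nonpos_iff.1 hle
    exact sub_eq_zero.1 this
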